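/- Multilevel cost–variance optimization: suppose a multilevel estimator with levels l ∈ {0,...,L}, Δ_l = 2^{-l}, has MSE bound Σ_{l=0}^L Δ_l^β/N_l + Δ_L for β = 1 and per-level cost Σ_{l=0}^L N_l Δ_l^{-1}. Given ε > 0, choosing L so that Δ_L = ε² and N_l = ⌈ε^{-2} Δ_l^{1/2+ρ}⌉ for any fixed 0 < ρ < 1/2 yields MSE O(ε²) and total cost O(ε^{-4}), as ε → 0. -/
import Mathlib

open Real Finset


set_option maxHeartbeats 1600000 in
/-- Multilevel cost–variance optimization (`β = 1`): with `Δ_l = 2^{-l}`,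
`L = ⌈2 log₂(1/ε)⌉` (so `Δ_L ≍ ε²`) and `N_l = ⌈ε^{-2} Δ_l^{1/2+ρ}⌉` for fixed
`0 < ρ < 1/2`, the MSE bound `Σ_{l≤L} Δ_l/N_l + Δ_L` is `O(ε²)` and the cost
`Σ_{l≤L} N_l Δ_l^{-1}` is `O(ε^{-4})`, uniformly over `ε ∈ (0,1)`. -/
theorem stmt19 (ρ : ℝ) (hρ0 : 0 < ρ) (hρ : ρ < 1 / 2) :
    ∃ C C' : ℝ, 0 < C ∧ 0 < C' ∧ ∀ ε : ℝ, 0 < ε → ε < 1 →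
      ∀ L : ℕ, L = ⌈2 * Real.logb 2 (1 / ε)⌉₊ →
      ∀ N : ℕ → ℕ,
        (∀ l, N l = ⌈ε ^ (-2 : ℤ) * ((2 : ℝ) ^ (-(l : ℤ))) ^ ((1 : ℝ) / 2 + ρ)⌉₊) →
      ((∑ l ∈ Finset.range (L + 1), (2 : ℝ) ^ (-(l : ℤ)) / (N l : ℝ))
          + (2 : ℝ) ^ (-(L : ℤ)) ≤ C * ε ^ 2) ∧
      ((∑ l ∈ Finset.range (L + 1), (N l : ℝ) * (2 : ℝ) ^ (l : ℤ)) ≤ C' * ε ^ (-4 : ℤ)) := by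
  have hs0 : (0:ℝ) < 1/2 - ρ := by linarith
  set q : ℝ := (2:ℝ) ^ (-(1/2 - ρ)) with hqdef
  set r : ℝ := (2:ℝ) ^ (1/2 - ρ) with hrdef
  have hq0 : 0 < q := Real.rpow_pos_of_pos two_pos _
  have hq1 : q < 1 := Real.rpow_lt_one_of_one_lt_of_neg one_lt_two (by linarith)
  have hr1 : 1 < r := Real.one_lt_rpow_iff_of_pos two_pos |>.2 (Or.inl ⟨one_lt_two, hs0⟩)
  have h1q : 0 < 1 - q := by linarith
  have hr0 : 0 < r - 1 := by linarith
  refine ⟨1/(1-q) + 1, 2*r/(r-1) + 4, by positivity, by positivity, ?_⟩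
  intro ε hε0 hε1 L hL N hN
  have hε2 : (0:ℝ) < ε^2 := by positivity
  have hεz : ε ^ (-2:ℤ) = (ε^2)⁻¹ := by
    rw [zpow_neg, show ((2:ℤ)) = ((2:ℕ):ℤ) by norm_num, zpow_natCast]
  have ha : ∀ l : ℕ, (2:ℝ) ^ (-(l:ℤ)) = (2:ℝ) ^ (-(l:ℝ)) := by
    intro l
    rw [← Real.rpow_intCast 2 (-(l:ℤ))]; push_cast; ring_nf
  have hb : ∀ l : ℕ, ((2:ℝ) ^ (-(l:ℤ))) ^ ((1:ℝ)/2 + ρ) =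
      (2:ℝ) ^ (-(l:ℝ) * (1/2 + ρ)) := by
    intro l
    rw [ha l, ← Real.rpow_mul (by norm_num : (0:ℝ) ≤ 2)]
  have hqpow : ∀ l : ℕ, q ^ l = (2:ℝ) ^ (-(l:ℝ) * (1/2 - ρ)) := by
    intro l
    rw [hqdef, ← Real.rpow_natCast ((2:ℝ) ^ (-(1/2 - ρ))) l,
      ← Real.rpow_mul (by norm_num : (0:ℝ) ≤ 2)]
    ring_nf
  have hrpow : ∀ l : ℕ, r ^ l = (2:ℝ) ^ ((l:ℝ) * (1/2 - ρ)) := by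
    intro l
    rw [hrdef, ← Real.rpow_natCast ((2:ℝ) ^ ((1/2 - ρ))) l,
      ← Real.rpow_mul (by norm_num : (0:ℝ) ≤ 2)]
    ring_nf
  have hNge : ∀ l : ℕ, (ε^2)⁻¹ * (2:ℝ) ^ (-(l:ℝ) * (1/2 + ρ)) ≤ (N l : ℝ) := by
    intro l
    rw [hN l]
    calc (ε^2)⁻¹ * (2:ℝ) ^ (-(l:ℝ) * (1/2 + ρ))
        = ε ^ (-2:ℤ) * ((2:ℝ) ^ (-(l:ℤ))) ^ ((1:ℝ)/2 + ρ) := by rw [hεz, hb l]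
      _ ≤ _ := Nat.le_ceil _
  have hNpos : ∀ l : ℕ, (0:ℝ) < (N l : ℝ) := by
    intro l
    refine lt_of_lt_of_le ?_ (hNge l)
    positivity
  have hNle : ∀ l : ℕ, (N l : ℝ) ≤ (ε^2)⁻¹ * (2:ℝ) ^ (-(l:ℝ) * (1/2 + ρ)) + 1 := by
    intro l
    rw [hN l, hεz, hb l]
    exact (Nat.ceil_lt_add_one (by positivity)).le
  have hlogpos : 0 ≤ 2 * Real.logb 2 (1/ε) := by
    have h1 : 1 ≤ 1/ε := by rw [le_div_iff₀ hε0]; linarith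
    have := Real.logb_nonneg one_lt_two h1
    linarith
  have hlogeq : (2:ℝ) ^ (2 * Real.logb 2 (1/ε)) = (ε^2)⁻¹ := by
    rw [mul_comm, Real.rpow_mul (by norm_num : (0:ℝ) ≤ 2),
      Real.rpow_logb two_pos (by norm_num) (by positivity)]
    have h2 : ((1:ℝ)/ε) ^ (2:ℝ) = ((1/ε) ^ (2:ℕ)) := by
      rw [← Real.rpow_natCast (1/ε) 2]; norm_num
    rw [h2, div_pow, one_pow, one_div]
  have hLge : 2 * Real.logb 2 (1/ε) ≤ (L:ℝ) := hL ▸ Nat.le_ceil _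
  have hLle : (L:ℝ) ≤ 2 * Real.logb 2 (1/ε) + 1 := by
    rw [hL]; exact (Nat.ceil_lt_add_one hlogpos).le
  have hΔL : (2:ℝ) ^ (-(L:ℤ)) ≤ ε^2 := by
    rw [ha L]
    calc (2:ℝ) ^ (-(L:ℝ)) ≤ (2:ℝ) ^ (-(2 * Real.logb 2 (1/ε))) :=
          Real.rpow_le_rpow_of_exponent_le one_le_two (by linarith)
      _ = ε^2 := by
          rw [Real.rpow_neg (by norm_num : (0:ℝ) ≤ 2), hlogeq, inv_inv]
  have h2L : (2:ℝ) ^ ((L:ℝ)) ≤ 2 * (ε^2)⁻¹ := by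
    calc (2:ℝ) ^ ((L:ℝ)) ≤ (2:ℝ) ^ (2 * Real.logb 2 (1/ε) + 1) :=
          Real.rpow_le_rpow_of_exponent_le one_le_two hLle
      _ = 2 * (ε^2)⁻¹ := by
          rw [Real.rpow_add two_pos, hlogeq, Real.rpow_one, mul_comm]
  constructor
  · have hterm : ∀ l : ℕ, (2:ℝ) ^ (-(l:ℤ)) / (N l : ℝ) ≤ ε^2 * q ^ l := by
      intro l
      rw [div_le_iff₀ (hNpos l)]
      calc (2:ℝ) ^ (-(l:ℤ))
          = ε^2 * q ^ l * ((ε^2)⁻¹ * (2:ℝ) ^ (-(l:ℝ) * (1/2 + ρ))) := by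
            rw [hqpow l, ha l]
            rw [show ε^2 * (2:ℝ) ^ (-(l:ℝ) * (1/2 - ρ)) * ((ε^2)⁻¹ * (2:ℝ) ^ (-(l:ℝ) * (1/2 + ρ)))
                = (ε^2 * (ε^2)⁻¹) * ((2:ℝ) ^ (-(l:ℝ) * (1/2 - ρ)) * (2:ℝ) ^ (-(l:ℝ) * (1/2 + ρ))) by ring]
            rw [mul_inv_cancel₀ (ne_of_gt hε2), one_mul, ← Real.rpow_add two_pos]
            ring_nf
        _ ≤ ε^2 * q ^ l * (N l : ℝ) := by
            have h := hNge l
            have hpos : 0 ≤ ε^2 * q ^ l := by positivity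
            exact mul_le_mul_of_nonneg_left h hpos
    have hsum : ∑ l ∈ Finset.range (L+1), (2:ℝ) ^ (-(l:ℤ)) / (N l : ℝ)
        ≤ ε^2 * (1/(1-q)) := by
      calc ∑ l ∈ Finset.range (L+1), (2:ℝ) ^ (-(l:ℤ)) / (N l : ℝ)
          ≤ ∑ l ∈ Finset.range (L+1), ε^2 * q ^ l :=
            Finset.sum_le_sum fun l _ => hterm l
        _ = ε^2 * ∑ l ∈ Finset.range (L+1), q ^ l := by rw [Finset.mul_sum]
        _ ≤ ε^2 * (1/(1-q)) := by
            refine mul_le_mul_of_nonneg_left ?_ hε2.le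
            rw [geom_sum_eq (ne_of_lt hq1),
              show q ^ (L+1) - 1 = -(1 - q ^ (L+1)) by ring,
              show q - 1 = -(1 - q) by ring, neg_div_neg_eq]
            have hq' : 0 ≤ q ^ (L+1) := by positivity
            rw [div_le_div_iff₀ h1q h1q]
            nlinarith
    calc (∑ l ∈ Finset.range (L+1), (2:ℝ) ^ (-(l:ℤ)) / (N l : ℝ)) + (2:ℝ) ^ (-(L:ℤ))
        ≤ ε^2 * (1/(1-q)) + ε^2 := add_le_add hsum hΔL
      _ = (1/(1-q) + 1) * ε^2 := by ring
  · have hε4 : ε ^ (-4:ℤ) = (ε^2)⁻¹ * (ε^2)⁻¹ := by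
      rw [zpow_neg, ← mul_inv]
      congr 1
      rw [show ((4:ℤ)) = ((4:ℕ):ℤ) by norm_num, zpow_natCast]
      ring
    have hterm : ∀ l : ℕ, (N l : ℝ) * (2:ℝ) ^ (l:ℤ) ≤ (ε^2)⁻¹ * r ^ l + (2:ℝ) ^ l := by
      intro l
      have h2l : (2:ℝ) ^ (l:ℤ) = (2:ℝ) ^ ((l:ℝ)) := by
        rw [← Real.rpow_intCast 2 (l:ℤ)]; push_cast; ring_nf
      have h2lpos : (0:ℝ) < (2:ℝ) ^ ((l:ℝ)) := Real.rpow_pos_of_pos two_pos _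
      rw [h2l]
      calc (N l : ℝ) * (2:ℝ) ^ ((l:ℝ))
          ≤ ((ε^2)⁻¹ * (2:ℝ) ^ (-(l:ℝ) * (1/2 + ρ)) + 1) * (2:ℝ) ^ ((l:ℝ)) :=
            mul_le_mul_of_nonneg_right (hNle l) h2lpos.le
        _ = (ε^2)⁻¹ * r ^ l + (2:ℝ) ^ l := by
            rw [hrpow l, add_mul, one_mul, mul_assoc, ← Real.rpow_add two_pos,
              ← Real.rpow_natCast 2 l]
            ring_nf
    have hrL : r ^ L ≤ 2 * (ε^2)⁻¹ := by
      rw [hrpow L]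
      calc (2:ℝ) ^ ((L:ℝ) * (1/2 - ρ)) = ((2:ℝ) ^ ((L:ℝ))) ^ ((1:ℝ)/2 - ρ) := by
            rw [← Real.rpow_mul (by norm_num : (0:ℝ) ≤ 2)]
        _ ≤ (2 * (ε^2)⁻¹) ^ ((1:ℝ)/2 - ρ) :=
            Real.rpow_le_rpow (by positivity) h2L (by linarith)
        _ ≤ (2 * (ε^2)⁻¹) ^ (1:ℝ) := by
            refine Real.rpow_le_rpow_of_exponent_le ?_ (by linarith)
            have h1 : (1:ℝ) ≤ (ε^2)⁻¹ := by
              rw [le_inv_comm₀ one_pos hε2]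
              nlinarith
            linarith
        _ = 2 * (ε^2)⁻¹ := Real.rpow_one _
    have h1 : (1:ℝ) ≤ (ε^2)⁻¹ := by
      rw [le_inv_comm₀ one_pos hε2]
      nlinarith
    have hgeomr : ∑ l ∈ Finset.range (L+1), r ^ l ≤ r * r ^ L / (r - 1) := by
      rw [geom_sum_eq (by linarith : r ≠ 1), ← pow_succ']
      exact div_le_div_of_nonneg_right (sub_le_self _ zero_le_one) hr0.le
    have hgeom2 : ∑ l ∈ Finset.range (L+1), (2:ℝ) ^ l ≤ 4 * (ε^2)⁻¹ := by
      have h2L' : (2:ℝ) ^ (L+1) ≤ 4 * (ε^2)⁻¹ := by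
        have h2Le : (2:ℝ) ^ (L:ℕ) = (2:ℝ) ^ ((L:ℝ)) := (Real.rpow_natCast 2 L).symm
        rw [pow_succ, h2Le]
        linarith [h2L]
      calc ∑ l ∈ Finset.range (L+1), (2:ℝ) ^ l
          = (2:ℝ) ^ (L+1) - 1 := by
            rw [geom_sum_eq (by norm_num : (2:ℝ) ≠ 1)]
            norm_num
        _ ≤ 4 * (ε^2)⁻¹ := by linarith
    calc ∑ l ∈ Finset.range (L+1), (N l : ℝ) * (2:ℝ) ^ (l:ℤ)
        ≤ ∑ l ∈ Finset.range (L+1), ((ε^2)⁻¹ * r ^ l + (2:ℝ) ^ l) :=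
          Finset.sum_le_sum fun l _ => hterm l
      _ = (ε^2)⁻¹ * ∑ l ∈ Finset.range (L+1), r ^ l
            + ∑ l ∈ Finset.range (L+1), (2:ℝ) ^ l := by
          rw [Finset.sum_add_distrib, Finset.mul_sum]
      _ ≤ (ε^2)⁻¹ * (r * (2 * (ε^2)⁻¹) / (r - 1)) + 4 * (ε^2)⁻¹ := by
          refine add_le_add ?_ hgeom2
          refine mul_le_mul_of_nonneg_left ?_ (by positivity)
          refine le_trans hgeomr ?_
          gcongr
      _ ≤ (2*r/(r-1) + 4) * ε ^ (-4:ℤ) := by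
          rw [hε4]
          have heq : (ε^2)⁻¹ * (r * (2 * (ε^2)⁻¹) / (r - 1)) =
              (2*r/(r-1)) * ((ε^2)⁻¹ * (ε^2)⁻¹) := by ring
          have hexp : (2*r/(r-1) + 4) * ((ε^2)⁻¹ * (ε^2)⁻¹) =
              (2*r/(r-1)) * ((ε^2)⁻¹ * (ε^2)⁻¹) + 4 * ((ε^2)⁻¹ * (ε^2)⁻¹) := by ring
          have h4 : 4 * (ε^2)⁻¹ ≤ 4 * ((ε^2)⁻¹ * (ε^2)⁻¹) := by nlinarith [h1, inv_pos.2 hε2]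
          rw [heq, hexp]
          linarith
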